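/- Let D₁ be the Lie algebra with basis {L(x), I(x) : x ∈ A}, bracket [L(x),L(y)] = ∂(y−x)L(x+y), [L(x),I(y)] = ∂(y)I(x+y), [I(x),I(y)] = 0, where ∂ : A → F is additive and nondegenerate. Then the bilinear alternating map ψ₂ with ψ₂(L(x),L(y)) = δ_{x+y,0}·(∂(x)³ − ∂(x)) and ψ₂ zero on other basis pairs is a 2-cocycle on D₁. -/
import Mathlib


/-- The bracket of the Lie algebra `D₁` of generalized differential operators of order at
most one, on basis elements: `Sum.inl x` stands for `L x = t^x ∂`, `Sum.inr x` for
`I x = t^x`.  The result lives in the free module on the basis. -/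
noncomputable def d1Bracket {F A : Type*} [Field F] [AddCommGroup A]
    (d : A →+ F) : (A ⊕ A) → (A ⊕ A) → ((A ⊕ A) →₀ F)
  | Sum.inl x, Sum.inl y => Finsupp.single (Sum.inl (x + y)) (d (y - x))
  | Sum.inl x, Sum.inr y => Finsupp.single (Sum.inr (x + y)) (d y)
  | Sum.inr x, Sum.inl y => Finsupp.single (Sum.inr (y + x)) (- d x)
  | Sum.inr _, Sum.inr _ => 0

/-- Evaluation of the bilinear extension of a map `ψ` on basis pairs, in its first
argument, against an element of the free module. -/
noncomputable def pairEval {F A : Type*} [Field F] [AddCommGroup A]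
    (ψ : (A ⊕ A) → (A ⊕ A) → F) (m : (A ⊕ A) →₀ F) (b : A ⊕ A) : F :=
  m.sum fun b' c => c * ψ b' b

open Classical in
/-- The map `ψ₂` with `ψ₂(L x, L y) = δ_{x+y,0} (∂(x)³ − ∂(x))`, zero on other basis pairs, is an
(alternating) 2-cocycle on `D₁`. -/
theorem stmt_5 {F : Type*} [Field F] [CharZero F]
    {A : Type*} [AddCommGroup A]
    (d : A →+ F) (hd : ∀ x : A, d x = 0 → x = 0)
    (ψ : (A ⊕ A) → (A ⊕ A) → F)
    (hψ : ∀ x y : A, ψ (Sum.inl x) (Sum.inl y) = if x + y = 0 then (d x) ^ 3 - d x else 0)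
    (hψII : ∀ x y : A, ψ (Sum.inr x) (Sum.inr y) = 0)
    (hψLI : ∀ x y : A, ψ (Sum.inl x) (Sum.inr y) = 0)
    (hψIL : ∀ x y : A, ψ (Sum.inr x) (Sum.inl y) = 0) :
    (∀ b₁ b₂ : A ⊕ A, ψ b₁ b₂ = - ψ b₂ b₁) ∧
    (∀ b₁ b₂ b₃ : A ⊕ A,
      pairEval ψ (d1Bracket d b₁ b₂) b₃ + pairEval ψ (d1Bracket d b₂ b₃) b₁ +
        pairEval ψ (d1Bracket d b₃ b₁) b₂ = 0) := by
  have hsum : ∀ (b b₃ : A ⊕ A) (c : F),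
      pairEval ψ (Finsupp.single b c) b₃ = c * ψ b b₃ := by
    intro b b₃ c
    unfold pairEval
    rw [Finsupp.sum_single_index]
    simp
  have hz : ∀ b : A ⊕ A, pairEval ψ (0 : (A ⊕ A) →₀ F) b = 0 := by
    intro b; simp [pairEval]
  constructor
  · rintro (x | x) (y | y)
    · rw [hψ, hψ]
      by_cases h : x + y = 0
      · have hy : y = -x := (neg_eq_of_add_eq_zero_right h).symm
        subst hy
        rw [if_pos h, if_pos (by abel)]
        simp only [map_neg]
        ring
      · rw [if_neg h, if_neg (fun h' => h (by rwa [add_comm] at h')), neg_zero]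
    · rw [hψLI, hψIL, neg_zero]
    · rw [hψIL, hψLI, neg_zero]
    · rw [hψII, hψII, neg_zero]
  · rintro (x | x) (y | y) (z | z) <;>
      simp only [d1Bracket, hsum, hz, hψ, hψII, hψLI, hψIL, mul_zero, add_zero, zero_add]
    by_cases h : x + y + z = 0
    · have hz' : z = -(x + y) := by
        have := neg_eq_of_add_eq_zero_right h; exact this.symm
      subst hz'
      rw [if_pos (by abel), if_pos (by abel), if_pos (by abel)]
      simp only [map_add, map_sub, map_neg]
      ring
    · rw [if_neg h,
        if_neg (fun h' => h (by rw [show x + y + z = y + z + x by abel]; exact h')),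
        if_neg (fun h' => h (by rw [show x + y + z = z + x + y by abel]; exact h'))]
      ring
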